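/- Let d = 3 and define the local rule f : Fin 3 → Fin 3 → Fin 3 → Fin 3 by f x y z = h y z, where h 0 0 = 0, h 0 1 = 1, h 0 2 = 0, h 1 0 = 1, h 1 1 = 2, h 1 2 = 2, h 2 0 = 2, h 2 1 = 0, h 2 2 = 1 (the 3-state CA rule 102221010102221010102221010). Then for every odd n ≥ 3, the global map F of the n-cell periodic-boundary CA is bijective. -/
import Mathlib

def h7 : Fin 3 → Fin 3 → Fin 3 :=
  ![![0, 1, 0], ![1, 2, 2], ![2, 0, 1]]

def f7 : Fin 3 → Fin 3 → Fin 3 → Fin 3 := fun _ y z => h7 y z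

-- parity/flip lemma: on an odd cycle, no configuration can strictly alternate
-- between two distinct values along the rule P (i+1) = a → P i = b, P (i+1) = b → P i = a,
-- once it hits one of them.
lemma flip_contra {n : ℕ} [NeZero n] (hodd : Odd n) {X : Type} (P : ZMod n → X) (a b : X)
    (hab : a ≠ b)
    (h1 : ∀ i, P (i + 1) = a → P i = b) (h2 : ∀ i, P (i + 1) = b → P i = a)
    (i0 : ZMod n) (ha : P i0 = a) : False := by
  have claim : ∀ k : ℕ, P (i0 - k) = if Even k then a else b := by
    intro k
    induction k with
    | zero => simpa using ha
    | succ k ih =>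
      have e : (i0 - ((k + 1 : ℕ) : ZMod n)) + 1 = i0 - (k : ℕ) := by
        push_cast; ring
      by_cases hk : Even k
      · have hP : P ((i0 - ((k + 1 : ℕ) : ZMod n)) + 1) = a := by
          rw [e, ih, if_pos hk]
        have := h1 _ hP
        rw [this, if_neg (by simpa [Nat.even_add_one] using hk)]
      · have hP : P ((i0 - ((k + 1 : ℕ) : ZMod n)) + 1) = b := by
          rw [e, ih, if_neg hk]
        have := h2 _ hP
        rw [this, if_pos (by simpa [Nat.even_add_one] using hk)]
  have hn0 : ((n : ℕ) : ZMod n) = 0 := ZMod.natCast_self n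
  have := claim n
  rw [hn0, sub_zero, if_neg (by simpa using hodd)] at this
  exact hab (ha.symm.trans this)

theorem stmt_7 (n : ℕ) (hn : 3 ≤ n) (hodd : Odd n) :
    Function.Bijective
      (fun (c : ZMod n → Fin 3) (i : ZMod n) => f7 (c (i - 1)) (c i) (c (i + 1))) := by
  haveI : NeZero n := ⟨by omega⟩
  rw [← Finite.injective_iff_bijective]
  intro c c' hcc'
  have key : ∀ i : ZMod n, h7 (c i) (c (i + 1)) = h7 (c' i) (c' (i + 1)) := by
    intro i
    have := congrFun hcc' i
    simpa [f7] using this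
  -- backward propagation of agreement
  have injY : ∀ y y' z : Fin 3, h7 y z = h7 y' z → y = y' := by decide
  have prop : ∀ i : ZMod n, c (i + 1) = c' (i + 1) → c i = c' i := by
    intro i h
    have k := key i
    rw [h] at k
    exact injY _ _ _ k
  by_cases hex : ∃ j, c j = c' j
  · obtain ⟨j, hj⟩ := hex
    funext i
    have claim : ∀ k : ℕ, c (j - k) = c' (j - k) := by
      intro k
      induction k with
      | zero => simpa using hj
      | succ k ih =>
        have e : (j - ((k + 1 : ℕ) : ZMod n)) + 1 = j - (k : ℕ) := by
          push_cast; ring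
        apply prop
        rw [e]; exact ih
    have := claim (j - i).val
    rwa [ZMod.natCast_val, ZMod.cast_id, sub_sub_cancel] at this
  · push_neg at hex
    exfalso
    -- all positions differ; classify pairs by their sum in Fin 3
    set p : ZMod n → Fin 3 := fun i => c i + c' i with hp
    by_cases hA : ∃ i0, p i0 ≠ 1
    · obtain ⟨i0, hi0⟩ := hA
      have D0 : ∀ y y' z z' : Fin 3, h7 y z = h7 y' z' → y ≠ y' → z ≠ z' →
          z + z' = 0 → y + y' = 2 := by decide
      have D2 : ∀ y y' z z' : Fin 3, h7 y z = h7 y' z' → y ≠ y' → z ≠ z' →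
          z + z' = 2 → y + y' = 0 := by decide
      have h1 : ∀ i : ZMod n, p (i + 1) = 0 → p i = 2 := fun i h =>
        D0 _ _ _ _ (key i) (hex i) (hex (i + 1)) h
      have h2 : ∀ i : ZMod n, p (i + 1) = 2 → p i = 0 := fun i h =>
        D2 _ _ _ _ (key i) (hex i) (hex (i + 1)) h
      have h02 : p i0 = 0 ∨ p i0 = 2 := by
        have : ∀ x : Fin 3, x ≠ 1 → x = 0 ∨ x = 2 := by decide
        exact this _ hi0
      rcases h02 with h | h
      · exact flip_contra hodd p 0 2 (by decide) h1 h2 i0 h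
      · exact flip_contra hodd p 2 0 (by decide) h2 h1 i0 h
    · push_neg at hA
      -- all pairs are {0,1}: configuration must alternate 0,1
      have D1 : ∀ y y' z z' : Fin 3, h7 y z = h7 y' z' → y ≠ y' → z ≠ z' →
          y + y' = 1 → z + z' = 1 → ((z = 0 → y = 1) ∧ (z = 1 → y = 0)) := by decide
      have h1 : ∀ i : ZMod n, c (i + 1) = 0 → c i = 1 := fun i h =>
        (D1 _ _ _ _ (key i) (hex i) (hex (i + 1)) (hA i) (hA (i + 1))).1 h
      have h2 : ∀ i : ZMod n, c (i + 1) = 1 → c i = 0 := fun i h =>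
        (D1 _ _ _ _ (key i) (hex i) (hex (i + 1)) (hA i) (hA (i + 1))).2 h
      have h01 : c 0 = 0 ∨ c 0 = 1 := by
        have : ∀ a b : Fin 3, a ≠ b → a + b = 1 → a = 0 ∨ a = 1 := by decide
        exact this _ _ (hex 0) (hA 0)
      rcases h01 with h | h
      · exact flip_contra hodd c 0 1 (by decide) h1 h2 0 h
      · exact flip_contra hodd c 1 0 (by decide) h2 h1 0 h
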